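/- For n ≥ 18, the spectral radius of the graph K_{n−1}+e (the n-vertex graph obtained from K_{n−1} by adding one new vertex joined by a single edge to one vertex of K_{n−1}) is strictly less than the spectral radius of K_n \ E(S_{n−3}). -/

import Mathlib

open Matrix Finset

/-- Upper bound on the supremum of the real spectrum via weighted row sums. -/
lemma sSup_spectrum_le {n : ℕ} {A : Matrix (Fin n) (Fin n) ℝ} (hA : A.IsHermitian)
    (hnn : ∀ i j, 0 ≤ A i j) {y : Fin n → ℝ} (hy : ∀ i, 0 < y i) {c : ℝ} (hc : 0 ≤ c)
    (h : ∀ i, (A *ᵥ y) i ≤ c * y i) : sSup (spectrum ℝ A) ≤ c := by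
  apply Real.sSup_le _ hc
  intro lam hlam
  rw [hA.spectrum_real_eq_range_eigenvalues] at hlam
  obtain ⟨j, rfl⟩ := hlam
  set v : Fin n → ℝ := ⇑(hA.eigenvectorBasis j) with hv
  have hAv : A *ᵥ v = hA.eigenvalues j • v := hA.mulVec_eigenvectorBasis j
  have hvne : v ≠ 0 := by
    intro h0
    have := (hA.eigenvectorBasis).orthonormal.ne_zero j
    exact this (by ext k; exact congrFun h0 k)
  obtain ⟨i, -, hi⟩ := Finset.exists_max_image Finset.univ (fun k => |v k| / y k) ⟨j, Finset.mem_univ j⟩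
  obtain ⟨k0, hk0⟩ : ∃ k, v k ≠ 0 := by
    by_contra hcon
    push_neg at hcon
    exact hvne (funext hcon)
  set t := |v i| / y i with ht
  have htpos : 0 < t := lt_of_lt_of_le (div_pos (abs_pos.2 hk0) (hy k0)) (hi k0 (mem_univ k0))
  have hvk : ∀ k, |v k| ≤ t * y k := fun k => by
    have := hi k (mem_univ k)
    calc |v k| = (|v k| / y k) * y k := (div_mul_cancel₀ _ (hy k).ne').symm
    _ ≤ t * y k := by nlinarith [hy k]
  have hvi : |v i| = t * y i := by rw [ht, div_mul_cancel₀ _ (hy i).ne']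
  have key : |hA.eigenvalues j| * |v i| ≤ t * (c * y i) := by
    have h1 : (A *ᵥ v) i = hA.eigenvalues j * v i := by rw [hAv]; simp
    have h2 : |(A *ᵥ v) i| ≤ ∑ k, A i k * |v k| := by
      rw [mulVec, dotProduct]
      refine (Finset.abs_sum_le_sum_abs _ _).trans ?_
      refine Finset.sum_le_sum fun k _ => ?_
      rw [abs_mul, abs_of_nonneg (hnn i k)]
    have h3 : ∑ k, A i k * |v k| ≤ ∑ k, A i k * (t * y k) :=
      Finset.sum_le_sum fun k _ => mul_le_mul_of_nonneg_left (hvk k) (hnn i k)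
    have h4 : ∑ k, A i k * (t * y k) = t * (A *ᵥ y) i := by
      rw [mulVec, dotProduct, Finset.mul_sum]; congr 1; ext k; ring
    have h5 : t * (A *ᵥ y) i ≤ t * (c * y i) := mul_le_mul_of_nonneg_left (h i) htpos.le
    calc |hA.eigenvalues j| * |v i| = |(A *ᵥ v) i| := by rw [h1, abs_mul]
    _ ≤ ∑ k, A i k * |v k| := h2
    _ ≤ ∑ k, A i k * (t * y k) := h3
    _ = t * (A *ᵥ y) i := h4
    _ ≤ t * (c * y i) := h5
  rw [hvi] at key
  have := hy i
  calc hA.eigenvalues j ≤ |hA.eigenvalues j| := le_abs_self _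
  _ ≤ c := by nlinarith [mul_pos htpos this]

/-- Lower bound: Rayleigh quotient. -/
lemma lt_sSup_spectrum {n : ℕ} {A : Matrix (Fin n) (Fin n) ℝ} (hA : A.IsHermitian)
    {x : Fin n → ℝ} {c : ℝ} (h : c * (x ⬝ᵥ x) < x ⬝ᵥ (A *ᵥ x)) :
    c < sSup (spectrum ℝ A) := by
  have hne : Nonempty (Fin n) := by
    rcases Nat.eq_zero_or_pos n with h0 | h0
    · subst h0
      simp [dotProduct] at h
    · exact ⟨⟨0, h0⟩⟩
  set U : Matrix (Fin n) (Fin n) ℝ := (hA.eigenvectorUnitary : Matrix (Fin n) (Fin n) ℝ) with hU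
  have hUU : U * star U = 1 := Matrix.mem_unitaryGroup_iff.mp (hA.eigenvectorUnitary).2
  set z : Fin n → ℝ := star U *ᵥ x with hz
  have hstar : ∀ (M : Matrix (Fin n) (Fin n) ℝ) (v : Fin n → ℝ), star M *ᵥ v = v ᵥ* M := by
    intro M v
    ext k
    simp [Matrix.mulVec, Matrix.vecMul, dotProduct, Matrix.conjTranspose_apply, mul_comm]
  have e0 : x ⬝ᵥ x = z ⬝ᵥ z := by
    symm
    rw [hz]
    nth_rewrite 1 [hstar]
    rw [← Matrix.dotProduct_mulVec, Matrix.mulVec_mulVec, hUU, Matrix.one_mulVec]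
  have e1 : x ⬝ᵥ (A *ᵥ x) = ∑ k, hA.eigenvalues k * (z k)^2 := by
    conv_lhs => rw [hA.spectral_theorem, Unitary.conjStarAlgAut_apply]
    rw [← Matrix.mulVec_mulVec, ← Matrix.mulVec_mulVec, Matrix.dotProduct_mulVec, ← hstar, ← hz]
    simp only [dotProduct, Matrix.mulVec_diagonal]
    refine Finset.sum_congr rfl fun k _ => ?_
    simp [RCLike.ofReal_real_eq_id]
    ring
  obtain ⟨j0, -, hj0⟩ := Finset.exists_max_image Finset.univ hA.eigenvalues univ_nonempty
  set M := hA.eigenvalues j0 with hM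
  have e2 : x ⬝ᵥ (A *ᵥ x) ≤ M * (x ⬝ᵥ x) := by
    rw [e1, e0]
    have : (z ⬝ᵥ z) = ∑ k, (z k)^2 := by
      simp [dotProduct, sq]
    rw [this, Finset.mul_sum]
    exact Finset.sum_le_sum fun k _ =>
      mul_le_mul_of_nonneg_right (hj0 k (Finset.mem_univ k)) (sq_nonneg _)
  have hs : 0 ≤ x ⬝ᵥ x := by
    rw [e0]
    exact Finset.sum_nonneg fun k _ => mul_self_nonneg _
  have hcM : c < M := by nlinarith
  refine lt_of_lt_of_le hcM (le_csSup ?_ (hA.eigenvalues_mem_spectrum_real j0))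
  rw [hA.spectrum_real_eq_range_eigenvalues]
  exact (Set.finite_range _).bddAbove



/-- `K_n \ E(S_{n-3})`: the complete graph on `n` vertices minus the edges of a star
`S_{n-3}` with center `0` and leaves `1, …, n-4`. -/
def KnDelS (n : ℕ) : SimpleGraph (Fin n) :=
  ⊤ \ SimpleGraph.fromRel (fun u v => u.val = 0 ∧ 1 ≤ v.val ∧ v.val ≤ n - 4)

/-- `K_n \ E(S_{n-4} ∪ S_4)`: the complete graph on `n` vertices minus the edges of a star
`S_{n-4}` (center `0`, leaves `1, …, n-5`) and of a disjoint star `S_4` (center `n-4`,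
leaves `n-3, n-2, n-1`). -/
def KnDelSS (n : ℕ) : SimpleGraph (Fin n) :=
  ⊤ \ SimpleGraph.fromRel (fun u v =>
    (u.val = 0 ∧ 1 ≤ v.val ∧ v.val ≤ n - 5) ∨ (u.val = n - 4 ∧ n - 3 ≤ v.val))

/-- `K_n \ E(S_{n-4} ∪ K_3)`: the complete graph on `n` vertices minus the edges of a star
`S_{n-4}` (center `0`, leaves `1, …, n-5`) and of a disjoint triangle `K_3` on
`{n-3, n-2, n-1}`. -/
def KnDelSK (n : ℕ) : SimpleGraph (Fin n) :=
  ⊤ \ SimpleGraph.fromRel (fun u v =>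
    (u.val = 0 ∧ 1 ≤ v.val ∧ v.val ≤ n - 5) ∨ (n - 3 ≤ u.val ∧ n - 3 ≤ v.val))

/-- The spectral radius of a finite graph: the largest (real) eigenvalue of its
adjacency matrix, expressed as the supremum of the real spectrum. -/
noncomputable def specRad {V : Type*} [Fintype V] [DecidableEq V] (G : SimpleGraph V) : ℝ :=
  letI := Classical.decRel G.Adj
  sSup (spectrum ℝ (G.adjMatrix ℝ))

/-- `K_{n−1} + e`: the graph on `n` vertices consisting of a complete graph on the `n − 1`
vertices `0, …, n−2` together with the vertex `n−1`, which is adjacent only to vertex `0`. -/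
def KplusE (n : ℕ) : SimpleGraph (Fin n) :=
  SimpleGraph.fromRel (fun u v =>
    (u.val < n - 1 ∧ v.val < n - 1) ∨ (u.val = 0 ∧ v.val = n - 1))

set_option maxHeartbeats 2000000 in
/-- For `n ≥ 18`, `μ(K_{n−1} + e) < μ(K_n \ E(S_{n−3}))`. -/
theorem stmt9 (n : ℕ) (hn : 18 ≤ n) :
    specRad (KplusE n) < specRad (KnDelS n) := by
  letI iP : DecidableRel (KplusE n).Adj := Classical.decRel _
  letI iS : DecidableRel (KnDelS n).Adj := Classical.decRel _
  show sSup (spectrum ℝ ((KplusE n).adjMatrix ℝ)) < sSup (spectrum ℝ ((KnDelS n).adjMatrix ℝ))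
  have hn1 : (18:ℝ) ≤ (n:ℝ) := by exact_mod_cast hn
  set nr : ℝ := (n : ℝ) with hnr
  have hnrpos : 0 < nr := by linarith
  have hnr2 : (0:ℝ) < nr^2 := by positivity
  set c : ℝ := nr - 2 + 4 / nr^2 with hcdef
  have hceq : c = (nr^3 - 2*nr^2 + 4) / nr^2 := by rw [hcdef]; field_simp
  have hcpos : 0 < c := by
    have : (0:ℝ) ≤ 4 / nr^2 := by positivity
    rw [hcdef]; linarith
  -- special vertices
  have h0n : 0 < n := by omega
  set v0 : Fin n := ⟨0, h0n⟩ with hv0def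
  set vl : Fin n := ⟨n-1, by omega⟩ with hvldef
  set va : Fin n := ⟨n-3, by omega⟩ with hvadef
  set vb : Fin n := ⟨n-2, by omega⟩ with hvbdef
  have hv0 : v0.val = 0 := rfl
  have hvl : vl.val = n-1 := rfl
  have hva : va.val = n-3 := rfl
  have hvb : vb.val = n-2 := rfl
  clear hv0def hvldef hvadef hvbdef
  -- adjacency characterizations
  have adjP : ∀ i j : Fin n, (KplusE n).Adj i j ↔
      (i.val ≠ j.val ∧ (i.val = n-1 → j.val = 0) ∧ (j.val = n-1 → i.val = 0)) := by
    intro i j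
    simp only [KplusE, SimpleGraph.fromRel_adj, ne_eq, Fin.ext_iff, Fin.val_mk, Fin.val_mk]
    have := i.is_lt; have := j.is_lt
    omega
  have adjS : ∀ i j : Fin n, (KnDelS n).Adj i j ↔
      (i.val ≠ j.val ∧ (i.val = 0 → n-3 ≤ j.val) ∧ (j.val = 0 → n-3 ≤ i.val)) := by
    intro i j
    simp only [KnDelS, SimpleGraph.sdiff_adj, SimpleGraph.top_adj, SimpleGraph.fromRel_adj, ne_eq,
      Fin.ext_iff, Fin.val_mk, not_and, not_or]
    have := i.is_lt; have := j.is_lt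
    omega
  have herm : ∀ (G : SimpleGraph (Fin n)) (inst : DecidableRel G.Adj),
      (G.adjMatrix ℝ).IsHermitian := by
    intro G inst
    unfold Matrix.IsHermitian
    ext i j
    simp only [Matrix.conjTranspose_apply, SimpleGraph.adjMatrix_apply, star_trivial]
    by_cases h : G.Adj i j
    · simp [h, h.symm]
    · rw [if_neg h, if_neg (fun h2 => h h2.symm)]
  have hnn : ∀ (G : SimpleGraph (Fin n)) (inst : DecidableRel G.Adj) (i j : Fin n),
      0 ≤ G.adjMatrix ℝ i j := by
    intro G inst i j
    rw [SimpleGraph.adjMatrix_apply]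
    split_ifs <;> norm_num
  ---------------------------------------------------------------------------
  -- Upper bound for KplusE
  ---------------------------------------------------------------------------
  set y : Fin n → ℝ := fun j => nr^2 + (if j = v0 then 4 else 0) +
      (if j = vl then 2*nr - nr^2 else 0) with hy
  have hv0l : v0 ≠ vl := by
    intro h
    have h2 := congrArg Fin.val h
    rw [hv0, hvl] at h2
    omega
  have hyv0 : y v0 = nr^2 + 4 := by simp [hy, hv0l]
  have hyvl : y vl = 2*nr := by simp [hy, hv0l.symm]
  have hymid : ∀ j, j ≠ v0 → j ≠ vl → y j = nr^2 := by
    intro j h1 h2; simp [hy, h1, h2]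
  have hypos : ∀ j, 0 < y j := by
    intro j
    simp only [hy]
    split_ifs <;> nlinarith
  have hytot : ∑ j : Fin n, y j = nr^3 + 2*nr - nr^2 + 4 := by
    simp only [hy]
    rw [Finset.sum_add_distrib, Finset.sum_add_distrib, Finset.sum_const,
      Fintype.sum_ite_eq' v0 (fun _ => (4:ℝ)), Fintype.sum_ite_eq' vl (fun _ => 2*nr - nr^2)]
    simp only [Finset.card_univ, Fintype.card_fin, nsmul_eq_mul, ← hnr]
    ring
  have hNP0 : (KplusE n).neighborFinset v0 = Finset.univ.erase v0 := by
    ext u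
    simp only [SimpleGraph.mem_neighborFinset, adjP, Finset.mem_erase, Finset.mem_univ,
      and_true, ne_eq, Fin.ext_iff, hv0, implies_true, true_implies, true_and, and_true, not_false_iff]
    have := u.is_lt
    omega
  have hNPl : (KplusE n).neighborFinset vl = {v0} := by
    ext u
    simp only [SimpleGraph.mem_neighborFinset, adjP, Finset.mem_singleton, Fin.ext_iff, hv0, hvl, implies_true, true_implies, true_and, and_true]
    have := u.is_lt
    omega
  have hNPm : ∀ i : Fin n, i ≠ v0 → i ≠ vl →
      (KplusE n).neighborFinset i = (Finset.univ.erase vl).erase i := by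
    intro i h1 h2
    have h1' : i.val ≠ 0 := fun h => h1 (Fin.ext h)
    have h2' : i.val ≠ n-1 := fun h => h2 (Fin.ext h)
    ext u
    simp only [SimpleGraph.mem_neighborFinset, adjP, Finset.mem_erase, Finset.mem_univ,
      and_true, ne_eq, Fin.ext_iff, hvl, implies_true, true_implies, true_and, and_true]
    have := u.is_lt
    omega
  have rowsP : ∀ i, ((KplusE n).adjMatrix ℝ *ᵥ y) i ≤ c * y i := by
    intro i
    rw [SimpleGraph.adjMatrix_mulVec_apply]
    by_cases hi0 : i = v0
    · subst hi0
      rw [hNP0, Finset.sum_erase_eq_sub (Finset.mem_univ v0), hytot, hyv0, hceq,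
        div_mul_eq_mul_div, le_div_iff₀ hnr2]
      nlinarith
    by_cases hil : i = vl
    · subst hil
      rw [hNPl, Finset.sum_singleton, hyv0, hyvl, hceq, div_mul_eq_mul_div, le_div_iff₀ hnr2]
      nlinarith [mul_nonneg (sub_nonneg.2 hn1) (mul_nonneg (mul_nonneg hnrpos.le hnrpos.le) hnrpos.le),
        mul_nonneg (sub_nonneg.2 hn1) (mul_nonneg hnrpos.le hnrpos.le), hnrpos]
    · rw [hNPm i hi0 hil,
        Finset.sum_erase_eq_sub (Finset.mem_erase.2 ⟨hil, Finset.mem_univ i⟩),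
        Finset.sum_erase_eq_sub (Finset.mem_univ vl), hytot, hyvl, hymid i hi0 hil, hceq,
        div_mul_eq_mul_div, le_div_iff₀ hnr2]
      nlinarith
  have hP : sSup (spectrum ℝ ((KplusE n).adjMatrix ℝ)) ≤ c :=
    sSup_spectrum_le (herm _ _) (hnn _ _) hypos hcpos.le rowsP
  ---------------------------------------------------------------------------
  -- Lower bound for KnDelS
  ---------------------------------------------------------------------------
  set x : Fin n → ℝ := fun j => nr + (if j = v0 then 3 - nr else 0) with hx
  have hxv0 : x v0 = 3 := by simp [hx]
  have hxo : ∀ j, j ≠ v0 → x j = nr := by intro j h; simp [hx, h]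
  have hva0 : va ≠ v0 := by intro h; have h2 := congrArg Fin.val h; rw [hva, hv0] at h2; omega
  have hvb0 : vb ≠ v0 := by intro h; have h2 := congrArg Fin.val h; rw [hvb, hv0] at h2; omega
  have hvl0 : vl ≠ v0 := hv0l.symm
  have hxtot : ∑ j : Fin n, x j = nr^2 + 3 - nr := by
    simp only [hx]
    rw [Finset.sum_add_distrib, Finset.sum_const,
      Fintype.sum_ite_eq' v0 (fun _ => (3:ℝ) - nr)]
    simp only [Finset.card_univ, Fintype.card_fin, nsmul_eq_mul, ← hnr]
    ring
  have hN0 : (KnDelS n).neighborFinset v0 = {va, vb, vl} := by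
    ext u
    simp only [SimpleGraph.mem_neighborFinset, adjS, Finset.mem_insert, Finset.mem_singleton,
      Fin.ext_iff, hv0, hva, hvb, hvl, implies_true, true_implies, true_and, and_true]
    have := u.is_lt
    omega
  have hNleaf : ∀ i : Fin n, i ≠ v0 → i.val < n-3 →
      (KnDelS n).neighborFinset i = (Finset.univ.erase v0).erase i := by
    intro i h1 h2
    have h1' : i.val ≠ 0 := fun h => h1 (Fin.ext h)
    ext u
    simp only [SimpleGraph.mem_neighborFinset, adjS, Finset.mem_erase, Finset.mem_univ,
      and_true, ne_eq, Fin.ext_iff, hv0, implies_true, true_implies, true_and, and_true, not_false_iff]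
    have := u.is_lt
    omega
  have hNR : ∀ i : Fin n, n-3 ≤ i.val →
      (KnDelS n).neighborFinset i = Finset.univ.erase i := by
    intro i h2
    ext u
    simp only [SimpleGraph.mem_neighborFinset, adjS, Finset.mem_erase, Finset.mem_univ,
      and_true, ne_eq, Fin.ext_iff, hv0, implies_true, true_implies, true_and, and_true, not_false_iff]
    have := u.is_lt
    omega
  have hAx : ((KnDelS n).adjMatrix ℝ *ᵥ x) = fun i =>
      (nr-2)*nr + (if i = v0 then 3*nr - (nr-2)*nr else 0) +
      (if n-3 ≤ i.val then 3 else 0) := by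
    funext i
    rw [SimpleGraph.adjMatrix_mulVec_apply]
    by_cases hi0 : i = v0
    · subst hi0
      have hab : va ∉ ({vb, vl} : Finset (Fin n)) := by
        simp only [Finset.mem_insert, Finset.mem_singleton, Fin.ext_iff, hva, hvb, hvl]
        omega
      have hbl : vb ∉ ({vl} : Finset (Fin n)) := by
        simp only [Finset.mem_singleton, Fin.ext_iff, hvb, hvl]
        omega
      have hv03 : ¬ (n-3 ≤ v0.val) := by rw [hv0]; omega
      rw [hN0, Finset.sum_insert hab, Finset.sum_insert hbl, Finset.sum_singleton,
        hxo va hva0, hxo vb hvb0, hxo vl hvl0, if_pos rfl, if_neg hv03]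
      ring
    · by_cases hiR : n-3 ≤ i.val
      · rw [hNR i hiR, Finset.sum_erase_eq_sub (Finset.mem_univ i), hxtot, hxo i hi0,
          if_neg hi0, if_pos hiR]
        ring
      · have hlt : i.val < n-3 := by omega
        rw [hNleaf i hi0 hlt,
          Finset.sum_erase_eq_sub (Finset.mem_erase.2 ⟨hi0, Finset.mem_univ i⟩),
          Finset.sum_erase_eq_sub (Finset.mem_univ v0), hxtot, hxv0, hxo i hi0,
          if_neg hi0, if_neg hiR]
        ring
  have hfilter3 : Finset.univ.filter (fun i : Fin n => n-3 ≤ i.val) = {va, vb, vl} := by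
    ext u
    simp only [Finset.mem_filter, Finset.mem_univ, true_and, Finset.mem_insert,
      Finset.mem_singleton, Fin.ext_iff, hva, hvb, hvl]
    have := u.is_lt
    omega
  have h3sum : ∑ i : Fin n, (if n-3 ≤ i.val then (3:ℝ)*nr else 0) = 9*nr := by
    rw [← Finset.sum_filter, hfilter3]
    have hab : va ∉ ({vb, vl} : Finset (Fin n)) := by
      simp only [Finset.mem_insert, Finset.mem_singleton, Fin.ext_iff, hva, hvb, hvl]
      omega
    have hbl : vb ∉ ({vl} : Finset (Fin n)) := by
      simp only [Finset.mem_singleton, Fin.ext_iff, hvb, hvl]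
      omega
    rw [Finset.sum_insert hab, Finset.sum_insert hbl, Finset.sum_singleton]
    ring
  have hxx : x ⬝ᵥ x = nr^3 - nr^2 + 9 := by
    have hpt : ∀ j : Fin n, x j * x j = nr^2 + (if j = v0 then 9 - nr^2 else 0) := by
      intro j
      by_cases h : j = v0
      · subst h; rw [hxv0, if_pos rfl]; ring
      · rw [hxo j h, if_neg h]; ring
    simp only [dotProduct]
    rw [Finset.sum_congr rfl (fun j _ => hpt j), Finset.sum_add_distrib, Finset.sum_const,
      Fintype.sum_ite_eq' v0 (fun _ => (9:ℝ) - nr^2)]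
    simp only [Finset.card_univ, Fintype.card_fin, nsmul_eq_mul, ← hnr]
    ring
  have hxAx : x ⬝ᵥ (((KnDelS n).adjMatrix ℝ) *ᵥ x) = (nr-1)*(nr-2)*nr^2 + 18*nr := by
    rw [hAx]
    simp only [dotProduct]
    have hpt : ∀ i : Fin n, x i * ((nr-2)*nr + (if i = v0 then 3*nr - (nr-2)*nr else 0) +
        (if n-3 ≤ i.val then (3:ℝ) else 0)) =
        (nr-2)*nr^2 + (if i = v0 then 9*nr - (nr-2)*nr^2 else 0) +
        (if n-3 ≤ i.val then 3*nr else 0) := by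
      intro i
      by_cases h : i = v0
      · subst h
        have hv03 : ¬ (n-3 ≤ v0.val) := by rw [hv0]; omega
        rw [hxv0, if_pos rfl, if_pos rfl, if_neg hv03, if_neg hv03]
        ring
      · by_cases h3 : n-3 ≤ i.val <;>
          rw [hxo i h, if_neg h, if_neg h] <;> [rw [if_pos h3, if_pos h3]; rw [if_neg h3, if_neg h3]] <;> ring
    rw [Finset.sum_congr rfl (fun i _ => hpt i), Finset.sum_add_distrib, Finset.sum_add_distrib,
      Finset.sum_const, Fintype.sum_ite_eq' v0 (fun _ => 9*nr - (nr-2)*nr^2), h3sum]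
    simp only [Finset.card_univ, Fintype.card_fin, nsmul_eq_mul, ← hnr]
    ring
  have hS : c < sSup (spectrum ℝ ((KnDelS n).adjMatrix ℝ)) := by
    apply lt_sSup_spectrum (herm _ _)
    rw [hxx, hxAx, hceq, div_mul_eq_mul_div, div_lt_iff₀ hnr2]
    nlinarith
  exact lt_of_le_of_lt hP hS
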